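/- Let A be a quasinormable Fréchet–Arens–Michael algebra with a right locally bounded approximate identity. Then A has a right bounded approximate identity, i.e., a net (e_α) in A such that {e_α} is von Neumann bounded and a·e_α → a for every a ∈ A. -/

import Mathlib

open Filter Topology Bornology Set Pointwise

universe u


section Aux
variable {A : Type u} [NonUnitalRing A] [Module ℂ A]

private def Good (q : ℕ → Seminorm ℂ A) (C : ℕ → ℝ) (n : ℕ)
    (u : Finset A → ℕ → A) (φ : ℕ → ℝ) (Θ Λ : ℝ) : Prop :=
  0 ≤ Θ ∧ Θ ≤ (2⁻¹ : ℝ) ^ (n + 1) ∧ Θ * C n ≤ (2⁻¹ : ℝ) ^ (n + 2) ∧ 1 ≤ Λ ∧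
    (∀ k, 0 ≤ φ k) ∧
    (∀ (G : Finset A) (m : ℕ) (k : ℕ), q k (u G m) ≤ φ k) ∧
    (∀ (G : Finset A) (m : ℕ), ∀ a ∈ G, ∀ j < n,
      q j (a - a * u G m) ≤ Λ / ((m : ℝ) + 1) + Θ * q j a)

set_option maxHeartbeats 1000000 in
private lemma good_step (q : ℕ → Seminorm ℂ A)
    (hqmono : ∀ j n : ℕ, j ≤ n → ∀ x : A, q j x ≤ q n x)
    (hqmul : ∀ (n : ℕ) (x y : A), q n (x * y) ≤ q n x * q n y)
    (C : ℕ → ℝ) (hC : ∀ n, 0 < C n)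
    (hkey : ∀ (n : ℕ) (ε : ℝ), 0 < ε → ∃ β : ℕ → ℝ, (∀ k, 0 ≤ β k) ∧
      ∀ (m : ℕ) (G : Finset A), ∃ c d : A,
        (∀ k, q k c ≤ C n * β k) ∧ (∀ k, k ≤ n → q k d ≤ C n * ε) ∧
        (∀ k, k ≤ n → q k (c + d) ≤ C n) ∧
        ∀ a ∈ G, q n (a - a * (c + d)) ≤ 1 / ((m : ℝ) + 1))
    (n : ℕ) (u : Finset A → ℕ → A) (φ : ℕ → ℝ) (Θ Λ : ℝ)
    (hg : Good q C n u φ Θ Λ) :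
    ∃ u' φ' Θ' Λ', Good q C (n + 1) u' φ' Θ' Λ' ∧
      ∀ k < n, φ' k ≤ φ k + (2⁻¹ : ℝ) ^ n := by
  obtain ⟨hΘ0, hΘ1, hΘC, hΛ1, hφ0, hprof, hres⟩ := hg
  -- the max of the profile up to level n
  have hne : (Finset.range (n + 1)).Nonempty := ⟨0, by simp⟩
  set Φ : ℝ := 1 + (Finset.range (n + 1)).sup' hne φ with hΦdef
  have hΦj : ∀ j ≤ n, 1 + φ j ≤ Φ := by
    intro j hj
    have : φ j ≤ (Finset.range (n + 1)).sup' hne φ :=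
      Finset.le_sup' φ (by simp [Nat.lt_succ_iff, hj])
    linarith
  have hΦ1 : 1 ≤ Φ := by
    have h0 := hΦj 0 (Nat.zero_le n)
    have := hφ0 0
    linarith
  have hΦpos : 0 < Φ := lt_of_lt_of_le one_pos hΦ1
  -- choose ε
  set K : ℝ := C n * (1 + Φ) * (1 + C (n + 1)) with hKdef
  have hKpos : 0 < K := by
    have := hC n; have := hC (n + 1); positivity
  set ε : ℝ := (2⁻¹ : ℝ) ^ (n + 3) / K with hεdef
  have hεpos : 0 < ε := by positivity
  set Θ' : ℝ := C n * ε * (1 + Φ) with hΘ'def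
  have hΘ'pos : 0 < Θ' := by have := hC n; positivity
  have hΘ'eq : Θ' * (1 + C (n + 1)) = (2⁻¹ : ℝ) ^ (n + 3) := by
    rw [hΘ'def, hεdef, hKdef]
    have hCn := (hC n).ne'
    have hC1 : 1 + C (n + 1) ≠ 0 := by have := hC (n + 1); linarith
    field_simp
  have hΘ'le : Θ' ≤ (2⁻¹ : ℝ) ^ (n + 3) := by
    nlinarith [hC (n + 1), hΘ'pos]
  have hΘ'C : Θ' * C (n + 1) ≤ (2⁻¹ : ℝ) ^ (n + 3) := by
    nlinarith [hC (n + 1), hΘ'pos]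
  have hpow : (2⁻¹ : ℝ) ^ (n + 3) ≤ (2⁻¹ : ℝ) ^ (n + 2) :=
    pow_le_pow_of_le_one (by norm_num) (by norm_num) (by omega)
  obtain ⟨β, hβ0, hcd⟩ := hkey n ε hεpos
  -- choose the accuracy for the absorber
  obtain ⟨mw, hmw⟩ := exists_nat_ge (Λ * 2 ^ (n + 2))
  have hmw' : Λ / ((mw : ℝ) + 1) ≤ (2⁻¹ : ℝ) ^ (n + 2) := by
    have h2 : (0:ℝ) < 2 ^ (n + 2) := by positivity
    have hΛpos : (0:ℝ) < Λ := lt_of_lt_of_le one_pos hΛ1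
    have hm1 : Λ * 2 ^ (n + 2) ≤ (mw : ℝ) + 1 := le_trans hmw (by linarith)
    have hmpos : (0:ℝ) < (mw : ℝ) + 1 := lt_of_lt_of_le (by positivity) hm1
    rw [div_le_iff₀ hmpos]
    calc Λ = (2⁻¹ : ℝ) ^ (n + 2) * (Λ * 2 ^ (n + 2)) := by
            rw [inv_pow]; field_simp
      _ ≤ (2⁻¹ : ℝ) ^ (n + 2) * ((mw : ℝ) + 1) := by
            apply mul_le_mul_of_nonneg_left hm1 (by positivity)
  -- the new profile
  set φ' : ℕ → ℝ := fun k => if k < n then φ k + (2⁻¹ : ℝ) ^ n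
      else φ k + C n * β k * (1 + φ k) with hφ'def
  have hφ'0 : ∀ k, 0 ≤ φ' k := by
    intro k
    rw [hφ'def]
    dsimp only
    split
    · have := hφ0 k; positivity
    · have := hφ0 k; have := hβ0 k; have := (hC n).le; positivity
  -- construct the new units
  have hbuild : ∀ (G : Finset A) (m : ℕ), ∃ u'' : A,
      (∀ k, q k u'' ≤ φ' k) ∧
      (∀ a ∈ G, ∀ j < n + 1,
        q j (a - a * u'') ≤ (1 + Φ) / ((m : ℝ) + 1) + Θ' * q j a) := by
    intro G m
    obtain ⟨c, d, hcQ, hdQ, hwQ, hwres⟩ := hcd m G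
    set w : A := c + d with hwdef
    set v : A := u {w} mw with hvdef
    have hcw : c = w - d := by rw [hwdef]; abel
    have hqv : ∀ k, q k v ≤ φ k := fun k => hprof {w} mw k
    -- absorber residual on w
    have hwv : ∀ j < n, q j (w - w * v) ≤ (2⁻¹ : ℝ) ^ (n + 2) + (2⁻¹ : ℝ) ^ (n + 2) := by
      intro j hj
      have h1 := hres {w} mw w (Finset.mem_singleton_self w) j hj
      have h2 : Θ * q j w ≤ Θ * C n :=
        mul_le_mul_of_nonneg_left (hwQ j (le_of_lt hj)) hΘ0
      calc q j (w - w * v) ≤ Λ / ((mw : ℝ) + 1) + Θ * q j w := h1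
        _ ≤ (2⁻¹ : ℝ) ^ (n + 2) + (2⁻¹ : ℝ) ^ (n + 2) :=
            add_le_add hmw' (le_trans h2 hΘC)
    refine ⟨v + c - c * v, ?_, ?_⟩
    · -- profile
      intro k
      rw [hφ'def]
      dsimp only
      have hcε : (0:ℝ) ≤ C n * ε := by have := (hC n).le; positivity
      by_cases hk : k < n
      · rw [if_pos hk]
        have hkn : k ≤ n := le_of_lt hk
        have hiden : v + c - c * v = v + (w - w * v) - (d - d * v) := by
          rw [hcw]; noncomm_ring
        have hd1 : q k d ≤ C n * ε := hdQ k hkn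
        have hdv : q k (d - d * v) ≤ Θ' := by
          have h2 : q k (d * v) ≤ (C n * ε) * φ k := by
            refine le_trans (hqmul k _ _) ?_
            exact mul_le_mul hd1 (hqv k) (apply_nonneg _ _) hcε
          calc q k (d - d * v) ≤ q k d + q k (d * v) := map_sub_le_add _ _ _
            _ ≤ C n * ε + (C n * ε) * φ k := add_le_add hd1 h2
            _ = C n * ε * (1 + φ k) := by ring
            _ ≤ C n * ε * (1 + Φ) := by
                apply mul_le_mul_of_nonneg_left ?_ hcε
                linarith [hΦj k hkn]
            _ = Θ' := by rw [hΘ'def]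
        have hx : (2⁻¹:ℝ) ^ (n + 2) = (2⁻¹:ℝ) ^ n * (2⁻¹:ℝ) ^ 2 := by
          rw [← pow_add]
        calc q k (v + c - c * v) = q k (v + (w - w * v) - (d - d * v)) := by
              rw [hiden]
          _ ≤ q k (v + (w - w * v)) + q k (d - d * v) := map_sub_le_add _ _ _
          _ ≤ (q k v + q k (w - w * v)) + q k (d - d * v) :=
              add_le_add (map_add_le_add _ _ _) le_rfl
          _ ≤ (φ k + ((2⁻¹ : ℝ) ^ (n + 2) + (2⁻¹ : ℝ) ^ (n + 2))) + Θ' :=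
              add_le_add (add_le_add (hqv k) (hwv k hk)) hdv
          _ ≤ φ k + (2⁻¹ : ℝ) ^ n := by
              have h3 : Θ' ≤ (2⁻¹:ℝ) ^ (n + 2) := le_trans hΘ'le hpow
              nlinarith [hx]
      · rw [if_neg hk]
        have hc1 : q k c ≤ C n * β k := hcQ k
        have h2 : q k (c * v) ≤ (C n * β k) * φ k := by
          refine le_trans (hqmul k _ _) ?_
          exact mul_le_mul hc1 (hqv k) (apply_nonneg _ _)
            (by have := (hC n).le; have := hβ0 k; positivity)
        calc q k (v + c - c * v) ≤ q k (v + c) + q k (c * v) := map_sub_le_add _ _ _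
          _ ≤ (q k v + q k c) + q k (c * v) := add_le_add (map_add_le_add _ _ _) le_rfl
          _ ≤ (φ k + C n * β k) + (C n * β k) * φ k :=
              add_le_add (add_le_add (hqv k) hc1) h2
          _ = φ k + C n * β k * (1 + φ k) := by ring
    · -- residual
      intro a ha j hj
      have hjn : j ≤ n := Nat.lt_succ_iff.mp hj
      have hiden : a - a * (v + c - c * v) =
          ((a - a * w) - (a - a * w) * v) + (a * d - (a * d) * v) := by
        rw [hcw]; noncomm_ring
      have haw : q j (a - a * w) ≤ 1 / ((m : ℝ) + 1) :=
        le_trans (hqmono j n hjn _) (hwres a ha)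
      have hm0 : (0:ℝ) ≤ 1 / ((m : ℝ) + 1) := by positivity
      have hdj : q j d ≤ C n * ε := hdQ j hjn
      have hΦj' : 1 + φ j ≤ Φ := hΦj j hjn
      have t12 : q j ((a - a * w) - (a - a * w) * v) ≤ (1 + Φ) / ((m : ℝ) + 1) := by
        have h2 : q j ((a - a * w) * v) ≤ (1 / ((m : ℝ) + 1)) * φ j := by
          refine le_trans (hqmul j _ _) ?_
          exact mul_le_mul haw (hqv j) (apply_nonneg _ _) hm0
        calc q j ((a - a * w) - (a - a * w) * v)
            ≤ q j (a - a * w) + q j ((a - a * w) * v) := map_sub_le_add _ _ _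
          _ ≤ 1 / ((m : ℝ) + 1) + (1 / ((m : ℝ) + 1)) * φ j := add_le_add haw h2
          _ = (1 / ((m : ℝ) + 1)) * (1 + φ j) := by ring
          _ ≤ (1 / ((m : ℝ) + 1)) * (1 + Φ) := by
              apply mul_le_mul_of_nonneg_left (by linarith) hm0
          _ = (1 + Φ) / ((m : ℝ) + 1) := by ring
      have t34 : q j (a * d - (a * d) * v) ≤ Θ' * q j a := by
        have h3 : q j (a * d) ≤ q j a * (C n * ε) := by
          refine le_trans (hqmul j _ _) ?_
          exact mul_le_mul_of_nonneg_left hdj (apply_nonneg _ _)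
        have h4 : q j ((a * d) * v) ≤ (q j a * (C n * ε)) * φ j := by
          refine le_trans (hqmul j _ _) ?_
          exact mul_le_mul h3 (hqv j) (apply_nonneg _ _)
            (by have := (hC n).le; positivity)
        calc q j (a * d - (a * d) * v) ≤ q j (a * d) + q j ((a * d) * v) :=
              map_sub_le_add _ _ _
          _ ≤ q j a * (C n * ε) + (q j a * (C n * ε)) * φ j := add_le_add h3 h4
          _ = (q j a) * (C n * ε * (1 + φ j)) := by ring
          _ ≤ (q j a) * (C n * ε * (1 + Φ)) := by
              apply mul_le_mul_of_nonneg_left ?_ (apply_nonneg _ _)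
              have hcε : (0:ℝ) ≤ C n * ε := by have := (hC n).le; positivity
              exact mul_le_mul_of_nonneg_left (by linarith) hcε
          _ = Θ' * q j a := by rw [hΘ'def]; ring
      calc q j (a - a * (v + c - c * v))
          = q j (((a - a * w) - (a - a * w) * v) + (a * d - (a * d) * v)) := by
            rw [hiden]
        _ ≤ q j ((a - a * w) - (a - a * w) * v) + q j (a * d - (a * d) * v) :=
            map_add_le_add _ _ _
        _ ≤ (1 + Φ) / ((m : ℝ) + 1) + Θ' * q j a := add_le_add t12 t34
  choose u' hu'prof hu'res using hbuild
  refine ⟨u', φ', Θ', 1 + Φ, ⟨hΘ'pos.le, le_trans hΘ'le hpow, hΘ'C, by linarith,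
    hφ'0, fun G m k => hu'prof G m k, fun G m a ha j hj => hu'res G m a ha j hj⟩, ?_⟩
  intro k hk
  rw [hφ'def]
  simp only [if_pos hk, le_refl]

private lemma good_base (q : ℕ → Seminorm ℂ A) (C : ℕ → ℝ) (hC : ∀ n, 0 < C n) :
    Good q C 0 (fun _ _ => 0) (fun _ => 0) 0 1 := by
  refine ⟨le_refl 0, by positivity, by simp, le_refl 1,
    fun k => le_refl 0, fun G m k => by simp, fun G m a ha j hj => absurd hj (Nat.not_lt_zero j)⟩

end Aux


section Aux2
variable {A : Type u} [NonUnitalRing A] [Module ℂ A]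

private lemma nsmul_mul_aux (n : ℕ) (x y : A) : (n • x) * y = n • (x * y) := by
  induction n with
  | zero => simp
  | succ k ih => simp [succ_nsmul, add_mul, ih]

private lemma cast_smul_mul_aux (n : ℕ) (x y : A) :
    (((n : ℕ) : ℂ) • x) * y = ((n : ℕ) : ℂ) • (x * y) := by
  rw [Nat.cast_smul_eq_nsmul, Nat.cast_smul_eq_nsmul, nsmul_mul_aux]

end Aux2


/-- A quasinormable Fréchet–Arens–Michael algebra with a right locally
bounded approximate identity has a right bounded approximate identity. -/
theorem stmt_9 {A : Type u} [NonUnitalRing A] [Module ℂ A] [UniformSpace A]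
    [IsUniformAddGroup A] [ContinuousSMul ℂ A] [CompleteSpace A] [T2Space A]
    (p : SeminormFamily ℂ A ℕ) (hp : WithSeminorms p)
    (hsub : ∀ (n : ℕ) (a b : A), p n (a * b) ≤ p n a * p n b)
    (hquasinorm : ∀ U ∈ 𝓝 (0 : A), ∃ V ∈ 𝓝 (0 : A), V ⊆ U ∧
      ∀ ε : ℝ, 0 < ε → ∃ B : Set A, IsVonNBounded ℂ B ∧ V ⊆ B + (ε : ℂ) • U)
    (hlbai : ∀ U ∈ 𝓝 (0 : A), ∃ C : ℝ, 0 < C ∧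
      ∀ F : Finset A, ∃ b ∈ (C : ℂ) • U, ∀ a ∈ F, a - a * b ∈ U) :
    ∃ (ι : Type u) (_ : Preorder ι) (_ : IsDirected ι (· ≤ ·)) (_ : Nonempty ι)
      (e : ι → A), IsVonNBounded ℂ (Set.range e) ∧
        ∀ a : A, Tendsto (fun i => a * e i) atTop (𝓝 a) := by
  classical
  set q : ℕ → Seminorm ℂ A := fun n => (Finset.range (n + 1)).sup p with hqdef
  have hqmono : ∀ j n : ℕ, j ≤ n → ∀ x : A, q j x ≤ q n x := by
    intro j n hjn x
    rw [hqdef]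
    exact Seminorm.le_def.mp
      (Finset.sup_mono (Finset.range_subset_range.mpr (by omega))) x
  have hqmul : ∀ (n : ℕ) (x y : A), q n (x * y) ≤ q n x * q n y := by
    intro n x y
    rw [hqdef]
    refine Seminorm.finset_sup_apply_le
      (mul_nonneg (apply_nonneg _ _) (apply_nonneg _ _)) ?_
    intro i hi
    calc p i (x * y) ≤ p i x * p i y := hsub i x y
      _ ≤ q n x * q n y := by
          rw [hqdef]
          exact mul_le_mul (Seminorm.le_finset_sup_apply hi)
            (Seminorm.le_finset_sup_apply hi) (apply_nonneg _ _) (apply_nonneg _ _)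
  have hqball : ∀ (n : ℕ) (r : ℝ), 0 < r → (q n).ball 0 r ∈ 𝓝 (0 : A) := by
    intro n r hr
    rw [hqdef]
    exact hp.hasBasis.mem_of_mem (p.basisSets_mem (Finset.range (n + 1)) hr)
  -- quasinormability data
  choose V hVmem hVU hVq using fun n : ℕ =>
    hquasinorm ((q n).ball 0 1) (hqball n 1 one_pos)
  -- local b.a.i. data
  choose C hCbai using fun n : ℕ => hlbai (V n) (hVmem n)
  have hC : ∀ n, 0 < C n := fun n => (hCbai n).1
  have hBAI := fun n => (hCbai n).2
  choose bb hbmem hbres using fun n F => hBAI n F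
  -- the key decomposition lemma
  have hkey : ∀ (n : ℕ) (ε : ℝ), 0 < ε → ∃ β : ℕ → ℝ, (∀ k, 0 ≤ β k) ∧
      ∀ (m : ℕ) (G : Finset A), ∃ c d : A,
        (∀ k, q k c ≤ C n * β k) ∧ (∀ k, k ≤ n → q k d ≤ C n * ε) ∧
        (∀ k, k ≤ n → q k (c + d) ≤ C n) ∧
        ∀ a ∈ G, q n (a - a * (c + d)) ≤ 1 / ((m : ℝ) + 1) := by
    intro n ε hε
    obtain ⟨B, hBbdd, hBsub⟩ := hVq n ε hε
    choose β hβpos hβ using fun k : ℕ =>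
      hp.isVonNBounded_iff_finset_seminorm_bounded.mp hBbdd (Finset.range (k + 1))
    refine ⟨β, fun k => (hβpos k).le, ?_⟩
    intro m G
    set F' : Finset A := G.image (fun a => ((m + 1 : ℕ) : ℂ) • a) with hF'def
    obtain ⟨x, hxV, hbx⟩ := Set.mem_smul_set.mp (hbmem n F')
    obtain ⟨c₀, hc₀, z, hz, hxsum⟩ := Set.mem_add.mp (hBsub hxV)
    have hCnorm : ‖((C n : ℝ) : ℂ)‖ = C n := by
      rw [Complex.norm_real, Real.norm_eq_abs, abs_of_pos (hC n)]
    have hεnorm : ‖((ε : ℝ) : ℂ)‖ = ε := by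
      rw [Complex.norm_real, Real.norm_eq_abs, abs_of_pos hε]
    refine ⟨((C n : ℝ) : ℂ) • c₀, ((C n : ℝ) : ℂ) • z, ?_, ?_, ?_, ?_⟩
    · intro k
      rw [map_smul_eq_mul, hCnorm]
      exact mul_le_mul_of_nonneg_left (le_of_lt (hβ k c₀ hc₀)) (hC n).le
    · intro k hk
      obtain ⟨y, hyU, hzy⟩ := Set.mem_smul_set.mp hz
      rw [← hzy, map_smul_eq_mul, hCnorm, map_smul_eq_mul, hεnorm]
      have hy1 : q k y ≤ 1 := by
        refine le_trans (hqmono k n hk y) ?_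
        exact le_of_lt ((Seminorm.mem_ball_zero _).mp hyU)
      have := mul_le_mul_of_nonneg_left hy1 hε.le
      nlinarith [hC n, hε]
    · intro k hk
      have hsum : ((C n : ℝ) : ℂ) • c₀ + ((C n : ℝ) : ℂ) • z = ((C n : ℝ) : ℂ) • x := by
        rw [← smul_add, hxsum]
      rw [hsum, map_smul_eq_mul, hCnorm]
      have hx1 : q k x ≤ 1 := by
        refine le_trans (hqmono k n hk x) ?_
        exact le_of_lt ((Seminorm.mem_ball_zero _).mp (hVU n hxV))
      nlinarith [hC n]
    · intro a ha
      have hsum : ((C n : ℝ) : ℂ) • c₀ + ((C n : ℝ) : ℂ) • z = bb n F' := by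
        rw [← smul_add, hxsum, hbx]
      rw [hsum]
      have ha' : ((m + 1 : ℕ) : ℂ) • a ∈ F' := by
        rw [hF'def]
        exact Finset.mem_image_of_mem _ ha
      have hmem := hbres n F' _ ha'
      have hrw : ((m + 1 : ℕ) : ℂ) • a - (((m + 1 : ℕ) : ℂ) • a) * bb n F'
          = ((m + 1 : ℕ) : ℂ) • (a - a * bb n F') := by
        rw [cast_smul_mul_aux, smul_sub]
      rw [hrw] at hmem
      have hball := (Seminorm.mem_ball_zero _).mp (hVU n hmem)
      rw [map_smul_eq_mul, Complex.norm_natCast] at hball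
      have hmpos : (0 : ℝ) < (m : ℝ) + 1 := by positivity
      have : ((m : ℝ) + 1) * q n (a - a * bb n F') < 1 := by
        push_cast at hball ⊢
        linarith
      rw [le_div_iff₀ hmpos]
      nlinarith
  -- build the chain of stage packages
  obtain ⟨hg0⟩ : Nonempty (Good q C 0 (fun _ _ => (0:A)) (fun _ => (0:ℝ)) 0 1) :=
    ⟨good_base q C hC⟩
  choose su sφ sΘ sΛ hsg hslink using good_step q hqmono hqmul C hC hkey
  let T : ℕ → Type u := fun n =>
    {x : (Finset A → ℕ → A) × (ℕ → ℝ) × ℝ × ℝ // Good q C n x.1 x.2.1 x.2.2.1 x.2.2.2}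
  let S : ∀ n, T n := fun n => Nat.rec
    (⟨⟨fun _ _ => (0:A), fun _ => (0:ℝ), 0, 1⟩, hg0⟩ : T 0)
    (fun n prev =>
      ⟨⟨su n prev.1.1 prev.1.2.1 prev.1.2.2.1 prev.1.2.2.2 prev.2,
        sφ n prev.1.1 prev.1.2.1 prev.1.2.2.1 prev.1.2.2.2 prev.2,
        sΘ n prev.1.1 prev.1.2.1 prev.1.2.2.1 prev.1.2.2.2 prev.2,
        sΛ n prev.1.1 prev.1.2.1 prev.1.2.2.1 prev.1.2.2.2 prev.2⟩,
       hsg n prev.1.1 prev.1.2.1 prev.1.2.2.1 prev.1.2.2.2 prev.2⟩) n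
  let uu : ℕ → Finset A → ℕ → A := fun n => (S n).1.1
  let φφ : ℕ → ℕ → ℝ := fun n => (S n).1.2.1
  let ΘΘ : ℕ → ℝ := fun n => (S n).1.2.2.1
  let ΛΛ : ℕ → ℝ := fun n => (S n).1.2.2.2
  have hgood : ∀ n, Good q C n (uu n) (φφ n) (ΘΘ n) (ΛΛ n) := fun n => (S n).2
  have hlink : ∀ n, ∀ k < n, φφ (n + 1) k ≤ φφ n k + (2⁻¹ : ℝ) ^ n := fun n =>
    hslink n (S n).1.1 (S n).1.2.1 (S n).1.2.2.1 (S n).1.2.2.2 (S n).2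
  -- the profiles are uniformly bounded in the stage
  have hφ0 : ∀ n k, 0 ≤ φφ n k := fun n => (hgood n).2.2.2.2.1
  have hφbound : ∀ i : ℕ, ∃ R : ℝ, 0 ≤ R ∧ ∀ n, φφ n i ≤ R := by
    intro i
    have haux : ∀ t : ℕ, φφ (i + 1 + t) i ≤ φφ (i + 1) i + 2 - 2 * (2⁻¹ : ℝ) ^ (i + t) := by
      intro t
      induction t with
      | zero =>
        have h1 : (2⁻¹ : ℝ) ^ i ≤ 1 :=
          pow_le_one₀ (by norm_num) (by norm_num)
        simp only [Nat.add_zero]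
        nlinarith
      | succ t ih =>
        have hl := hlink (i + 1 + t) i (by omega)
        have hidx : i + 1 + (t + 1) = (i + 1 + t) + 1 := by omega
        have hpw : (2⁻¹ : ℝ) ^ (i + 1 + t) = (2⁻¹ : ℝ) ^ (i + t) * 2⁻¹ := by
          rw [show i + 1 + t = (i + t) + 1 by omega, pow_succ]
        have hpw2 : (2⁻¹ : ℝ) ^ (i + (t + 1)) = (2⁻¹ : ℝ) ^ (i + t) * 2⁻¹ := by
          rw [show i + (t + 1) = (i + t) + 1 by omega, pow_succ]
        rw [hidx]
        calc φφ ((i + 1 + t) + 1) i ≤ φφ (i + 1 + t) i + (2⁻¹ : ℝ) ^ (i + 1 + t) := hl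
          _ ≤ φφ (i + 1) i + 2 - 2 * (2⁻¹ : ℝ) ^ (i + (t + 1)) := by
              have hx0 : (0:ℝ) ≤ (2⁻¹ : ℝ) ^ (i + t) := by positivity
              rw [hpw, hpw2]; nlinarith
    have hne2 : (Finset.range (i + 2)).Nonempty := ⟨0, by simp⟩
    set RR : ℝ := (Finset.range (i + 2)).sup' hne2 (fun n => φφ n i) + 2 with hRRdef
    refine ⟨RR, ?_, ?_⟩
    · have hm : (0:ℕ) ∈ Finset.range (i + 2) := Finset.mem_range.mpr (by omega)
      have h0 : φφ 0 i ≤ (Finset.range (i + 2)).sup' hne2 (fun n => φφ n i) :=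
        Finset.le_sup' (fun n => φφ n i) hm
      have := hφ0 0 i
      rw [hRRdef]; linarith
    · intro n
      rcases le_or_gt n (i + 1) with h | h
      · have hm : n ∈ Finset.range (i + 2) := Finset.mem_range.mpr (by omega)
        have h0 : φφ n i ≤ (Finset.range (i + 2)).sup' hne2 (fun n => φφ n i) :=
          Finset.le_sup' (fun n => φφ n i) hm
        rw [hRRdef]; linarith
      · obtain ⟨t, rfl⟩ : ∃ t, n = i + 1 + t := ⟨n - (i + 1), by omega⟩
        have h1 := haux t
        have h2 : (0 : ℝ) ≤ 2 * (2⁻¹ : ℝ) ^ (i + t) := by positivity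
        have hm : i + 1 ∈ Finset.range (i + 2) := Finset.mem_range.mpr (by omega)
        have h0 : φφ (i + 1) i ≤ (Finset.range (i + 2)).sup' hne2 (fun n => φφ n i) :=
          Finset.le_sup' (fun n => φφ n i) hm
        rw [hRRdef]; linarith
  -- accuracy choice for each stage
  choose mAcc hmAcc using fun n : ℕ => exists_nat_ge (ΛΛ n * 2 ^ n)
  have hΛ1 : ∀ n, 1 ≤ ΛΛ n := fun n => (hgood n).2.2.2.1
  have hmAcc' : ∀ n, ΛΛ n / ((mAcc n : ℝ) + 1) ≤ (2⁻¹ : ℝ) ^ n := by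
    intro n
    have hΛpos : (0 : ℝ) < ΛΛ n := lt_of_lt_of_le one_pos (hΛ1 n)
    have hm1 : ΛΛ n * 2 ^ n ≤ (mAcc n : ℝ) + 1 := le_trans (hmAcc n) (by linarith)
    have hmpos : (0 : ℝ) < (mAcc n : ℝ) + 1 := lt_of_lt_of_le (by positivity) hm1
    rw [div_le_iff₀ hmpos]
    calc ΛΛ n = (2⁻¹ : ℝ) ^ n * (ΛΛ n * 2 ^ n) := by
          rw [inv_pow]; field_simp
      _ ≤ (2⁻¹ : ℝ) ^ n * ((mAcc n : ℝ) + 1) :=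
          mul_le_mul_of_nonneg_left hm1 (by positivity)
  -- the net
  haveI hne : Nonempty (Finset A × ℕ) := ⟨(∅, 0)⟩
  have hdir : IsDirected (Finset A × ℕ) (· ≤ ·) := ⟨fun a b => ⟨(a.1 ∪ b.1, max a.2 b.2),
    ⟨Finset.subset_union_left, le_max_left _ _⟩,
    ⟨Finset.subset_union_right, le_max_right _ _⟩⟩⟩
  refine ⟨Finset A × ℕ, inferInstance, hdir, hne,
    fun i => uu (i.2 + 1) i.1 (mAcc (i.2 + 1)), ?_, ?_⟩
  · -- boundedness
    rw [hp.isVonNBounded_iff_seminorm_bounded]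
    intro i
    obtain ⟨R, hR0, hR⟩ := hφbound i
    refine ⟨R + 1, by linarith, ?_⟩
    rintro x ⟨⟨F, n⟩, rfl⟩
    have h1 : p i (uu (n + 1) F (mAcc (n + 1))) ≤ q i (uu (n + 1) F (mAcc (n + 1))) := by
      rw [hqdef]
      exact Seminorm.le_finset_sup_apply (Finset.self_mem_range_succ i)
    have h2 := (hgood (n + 1)).2.2.2.2.2.1 F (mAcc (n + 1)) i
    have h3 := hR (n + 1)
    dsimp only at h1 h2 ⊢
    linarith
  · -- convergence
    intro a
    rw [Filter.HasBasis.tendsto_right_iff hp.hasBasis_ball]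
    rintro ⟨s, r⟩ hr
    dsimp only at hr ⊢
    set N : ℕ := s.sup id with hNdef
    have hsN : ∀ x : A, (s.sup p) x ≤ q N x := by
      intro x
      have hsub' : s ⊆ Finset.range (N + 1) := by
        intro k hk
        exact Finset.mem_range.mpr (Nat.lt_succ_of_le (Finset.le_sup (f := id) hk))
      rw [hqdef]
      exact Seminorm.le_def.mp (Finset.sup_mono hsub') x
    have hqa : (0 : ℝ) < 1 + q N a := by positivity
    obtain ⟨n₁, hn₁⟩ := exists_pow_lt_of_lt_one (div_pos hr hqa)
      (by norm_num : (2⁻¹ : ℝ) < 1)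
    rw [eventually_atTop]
    refine ⟨({a}, max N n₁), ?_⟩
    rintro ⟨F, n⟩ hFn
    have hF1 : ({a} : Finset A) ⊆ F := hFn.1
    have hF2 : max N n₁ ≤ n := hFn.2
    have haF : a ∈ F := hF1 (Finset.mem_singleton_self a)
    have hNn : N ≤ n := le_trans (le_max_left _ _) hF2
    have hn₁n : n₁ ≤ n := le_trans (le_max_right _ _) hF2
    have hres := (hgood (n + 1)).2.2.2.2.2.2 F (mAcc (n + 1)) a haF N (by omega)
    have hΘb := (hgood (n + 1)).2.1
    have hΘ0' := (hgood (n + 1)).1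
    have hp1 : ΛΛ (n + 1) / ((mAcc (n + 1) : ℝ) + 1) ≤ (2⁻¹ : ℝ) ^ (n + 1) := hmAcc' (n + 1)
    have hpow1 : (2⁻¹ : ℝ) ^ (n + 1) ≤ (2⁻¹ : ℝ) ^ n₁ :=
      pow_le_pow_of_le_one (by norm_num) (by norm_num) (by omega)
    have hpow2 : (2⁻¹ : ℝ) ^ (n + 1 + 1) ≤ (2⁻¹ : ℝ) ^ n₁ :=
      pow_le_pow_of_le_one (by norm_num) (by norm_num) (by omega)
    have hΘq : ΘΘ (n + 1) * q N a ≤ (2⁻¹ : ℝ) ^ n₁ * q N a :=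
      mul_le_mul_of_nonneg_right (le_trans hΘb hpow2) (apply_nonneg _ _)
    rw [Seminorm.mem_ball]
    have hz : (s.sup p) (a * uu (n + 1) F (mAcc (n + 1)) - a)
        ≤ q N (a - a * uu (n + 1) F (mAcc (n + 1))) := by
      calc (s.sup p) (a * uu (n + 1) F (mAcc (n + 1)) - a)
          ≤ q N (a * uu (n + 1) F (mAcc (n + 1)) - a) := hsN _
        _ = q N (a - a * uu (n + 1) F (mAcc (n + 1))) := by
            rw [← neg_sub, map_neg_eq_map]
    have hfin : q N (a - a * uu (n + 1) F (mAcc (n + 1))) < r := by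
      calc q N (a - a * uu (n + 1) F (mAcc (n + 1)))
          ≤ ΛΛ (n + 1) / ((mAcc (n + 1) : ℝ) + 1) + ΘΘ (n + 1) * q N a := hres
        _ ≤ (2⁻¹ : ℝ) ^ n₁ + (2⁻¹ : ℝ) ^ n₁ * q N a :=
            add_le_add (le_trans hp1 hpow1) hΘq
        _ = (2⁻¹ : ℝ) ^ n₁ * (1 + q N a) := by ring
        _ < r := (lt_div_iff₀ hqa).mp hn₁
    linarith
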